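/- For the Markov chain on $[0,1)$ defined by $\eta_k = W_k/(W_k + 1 - \eta_{k-1})$ where $W_k \sim \mathrm{BetaPrime}(p/2, (n+p)/2)$ are i.i.d., the stationary distribution is $\mathrm{Beta}(p/2, n/2)$. -/

import Mathlib

open MeasureTheory ProbabilityTheory

/-- The Beta(a, b) distribution on `(0,1)`, defined via its density. -/
noncomputable def betaMeasure' (a b : ℝ) : Measure ℝ :=
  volume.withDensity fun x =>
    ENNReal.ofReal (if x ∈ Set.Ioo (0 : ℝ) 1 then
      Real.Gamma (a + b) / (Real.Gamma a * Real.Gamma b) *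
        x ^ (a - 1) * (1 - x) ^ (b - 1) else 0)

/-- The BetaPrime(a, b) distribution on `(0,∞)`, defined via its density. -/
noncomputable def betaPrimeMeasure (a b : ℝ) : Measure ℝ :=
  volume.withDensity fun w =>
    ENNReal.ofReal (if 0 < w then
      Real.Gamma (a + b) / (Real.Gamma a * Real.Gamma b) *
        w ^ (a - 1) * (1 + w) ^ (-(a + b)) else 0)

open Set
open scoped ENNReal

lemma beta_cx_eq {a b : ℝ} : ∀ x ∈ Ioo (0:ℝ) 1,
    ((x:ℂ) ^ ((a:ℂ)-1) * ((1:ℂ)-(x:ℂ)) ^ ((b:ℂ)-1)) = ((x ^ (a-1) * (1-x) ^ (b-1) : ℝ) : ℂ) := by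
  intro x hx
  rw [show ((a:ℂ)-1) = ((a-1:ℝ):ℂ) by push_cast; ring,
      show ((b:ℂ)-1) = ((b-1:ℝ):ℂ) by push_cast; ring,
      show ((1:ℂ) - (x:ℂ)) = ((1-x:ℝ):ℂ) by push_cast; ring,
      ← Complex.ofReal_cpow hx.1.le, ← Complex.ofReal_cpow (by linarith [hx.2] : (0:ℝ) ≤ 1 - x),
      ← Complex.ofReal_mul]

lemma integrableOn_beta {a b : ℝ} (ha : 0 < a) (hb : 0 < b) :
    IntegrableOn (fun x : ℝ => x ^ (a-1) * (1-x) ^ (b-1)) (Ioo 0 1) := by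
  have h := (Complex.betaIntegral_convergent (u := a) (v := b) (by simpa) (by simpa))
  have h2 : IntegrableOn (fun x : ℝ => (x:ℂ) ^ ((a:ℂ)-1) * ((1:ℂ)-(x:ℂ)) ^ ((b:ℂ)-1)) (Ioo 0 1) := by
    have := (intervalIntegrable_iff_integrableOn_Ioc_of_le zero_le_one).mp h
    exact this.mono_set Ioo_subset_Ioc_self
  refine IntegrableOn.congr_fun h2.re (fun x hx => ?_) measurableSet_Ioo
  simp [beta_cx_eq x hx]

lemma integral_beta {a b : ℝ} (ha : 0 < a) (hb : 0 < b) :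
    ∫ x in Ioo (0:ℝ) 1, x ^ (a-1) * (1-x) ^ (b-1)
      = Real.Gamma a * Real.Gamma b / Real.Gamma (a+b) := by
  have hG := Complex.Gamma_mul_Gamma_eq_betaIntegral (s := (a:ℂ)) (t := (b:ℂ))
    (by simpa) (by simpa)
  have hbi : Complex.betaIntegral a b = ((∫ x in Ioo (0:ℝ) 1, x ^ (a-1) * (1-x) ^ (b-1) : ℝ) : ℂ) := by
    rw [Complex.betaIntegral, intervalIntegral.integral_of_le zero_le_one,
        MeasureTheory.integral_Ioc_eq_integral_Ioo,
        setIntegral_congr_fun measurableSet_Ioo (fun x hx => beta_cx_eq x hx)]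
    exact integral_ofReal
  rw [hbi, ← Complex.ofReal_add, Complex.Gamma_ofReal, Complex.Gamma_ofReal,
      Complex.Gamma_ofReal, ← Complex.ofReal_mul, ← Complex.ofReal_mul] at hG
  have h := Complex.ofReal_inj.mp hG
  have hGab : Real.Gamma (a+b) ≠ 0 := (Real.Gamma_pos_of_pos (by linarith)).ne'
  rw [eq_div_iff hGab]
  linarith [h]

lemma lintegral_beta {a b : ℝ} (ha : 0 < a) (hb : 0 < b) :
    ∫⁻ x in Ioo (0:ℝ) 1, ENNReal.ofReal (x ^ (a-1) * (1-x) ^ (b-1))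
      = ENNReal.ofReal (Real.Gamma a * Real.Gamma b / Real.Gamma (a+b)) := by
  rw [← integral_beta ha hb, ← ofReal_integral_eq_lintegral_ofReal (integrableOn_beta ha hb)]
  filter_upwards [ae_restrict_mem measurableSet_Ioo] with x hx
  exact mul_nonneg (Real.rpow_nonneg hx.1.le _) (Real.rpow_nonneg (by linarith [hx.2]) _)

noncomputable def bd (a b : ℝ) (x : ℝ) : ℝ≥0∞ :=
  ENNReal.ofReal (if x ∈ Set.Ioo (0 : ℝ) 1 then
    Real.Gamma (a + b) / (Real.Gamma a * Real.Gamma b) * x ^ (a - 1) * (1 - x) ^ (b - 1) else 0)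

noncomputable def bpd (a b : ℝ) (w : ℝ) : ℝ≥0∞ :=
  ENNReal.ofReal (if 0 < w then
    Real.Gamma (a + b) / (Real.Gamma a * Real.Gamma b) *
      w ^ (a - 1) * (1 + w) ^ (-(a + b)) else 0)

lemma bd_measurable (a b : ℝ) : Measurable (bd a b) := by
  apply Measurable.ennreal_ofReal
  apply Measurable.ite measurableSet_Ioo _ measurable_const
  fun_prop

lemma bpd_measurable (a b : ℝ) : Measurable (bpd a b) := by
  apply Measurable.ennreal_ofReal
  apply Measurable.ite (by exact measurableSet_Ioi) _ measurable_const
  fun_prop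

lemma setLIntegral_eq_inter {f : ℝ → ℝ≥0∞} {A T : Set ℝ} (hA : MeasurableSet A)
    (hT : MeasurableSet T) (hf : ∀ x ∉ T, f x = 0) :
    ∫⁻ x in A, f x = ∫⁻ x in A ∩ T, f x := by
  rw [← lintegral_indicator hA, ← lintegral_indicator (hA.inter hT)]
  congr 1; funext x
  by_cases hx : x ∈ T
  · by_cases hx2 : x ∈ A <;> simp [indicator, hx, hx2]
  · by_cases hx2 : x ∈ A <;> simp [indicator, hx, hx2, hf x hx]

lemma lintegral_image_cov {s : Set ℝ} {f f' : ℝ → ℝ}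
    (hs : MeasurableSet s) (hf' : ∀ x ∈ s, HasDerivWithinAt f (f' x) s x)
    (hf : InjOn f s) (g : ℝ → ℝ≥0∞) :
    ∫⁻ x in f '' s, g x = ∫⁻ x in s, ENNReal.ofReal |f' x| * g (f x) := by
  simpa only [ContinuousLinearMap.det_toSpanSingleton] using
    lintegral_image_eq_lintegral_abs_det_fderiv_mul volume hs
      (fun x hx => (hf' x hx).hasFDerivWithinAt) hf g

-- image of s ∩ (0,1) under u ↦ c u/(1-u) is {w | w/(w+c) ∈ s} ∩ (0,∞), for 0 < c
lemma img_w {c : ℝ} (hc : 0 < c) (s : Set ℝ) :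
    (fun u => c * u / (1 - u)) '' (s ∩ Ioo 0 1) = {w | w / (w + c) ∈ s} ∩ Ioi 0 := by
  ext w
  constructor
  · rintro ⟨u, ⟨hus, hu0, hu1⟩, rfl⟩
    have h1u : 0 < 1 - u := by linarith
    have hw : 0 < c * u / (1 - u) := by positivity
    refine ⟨?_, hw⟩
    have hd : c * u / (1 - u) + c = c / (1 - u) := by field_simp; ring
    have : c * u / (1 - u) / (c * u / (1 - u) + c) = u := by
      rw [hd]; field_simp
    simpa [Set.mem_setOf_eq, this] using hus
  · rintro ⟨hws, hw⟩
    simp only [Set.mem_setOf_eq] at hws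
    have hw0 : (0:ℝ) < w := hw
    have hwc : 0 < w + c := by linarith
    refine ⟨w / (w + c), ⟨hws, ⟨by positivity, by rw [div_lt_one hwc]; linarith⟩⟩, ?_⟩
    have h1 : 1 - w / (w + c) = c / (w + c) := by field_simp; ring
    show c * (w / (w + c)) / (1 - w / (w + c)) = w
    rw [h1]
    field_simp

lemma hasDeriv_w {c : ℝ} {u : ℝ} (hu : u ∈ Ioo (0:ℝ) 1) :
    HasDerivAt (fun u => c * u / (1 - u)) (c / (1 - u) ^ 2) u := by
  have h1u : (1:ℝ) - u ≠ 0 := by have := hu.2; intro h; linarith [hu.2, h]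
  have h1 : HasDerivAt (fun u : ℝ => c * u) c u := by
    simpa using (hasDerivAt_id u).const_mul c
  have h2 : HasDerivAt (fun u : ℝ => 1 - u) (-1) u := by
    simpa using (hasDerivAt_id u).const_sub 1
  have : HasDerivAt (fun u => c * u / (1 - u)) ((c * (1 - u) - c * u * -1) / (1 - u) ^ 2) u :=
    h1.div h2 h1u
  convert this using 1
  ring

lemma inj_w {c : ℝ} (hc : 0 < c) : InjOn (fun u => c * u / (1 - u)) (Ioo (0:ℝ) 1) := by
  intro u1 h1 u2 h2 h
  have e1 : (1:ℝ) - u1 ≠ 0 := by have := h1.2; intro hh; linarith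
  have e2 : (1:ℝ) - u2 ≠ 0 := by have := h2.2; intro hh; linarith
  field_simp at h
  ring_nf at h
  have : c * u1 = c * u2 := by nlinarith [h]
  exact mul_left_cancel₀ hc.ne' this

noncomputable def betaPrimeMeasure' (a b : ℝ) : Measure ℝ := volume.withDensity (bpd a b)

lemma L1 {a b : ℝ} {e : ℝ} (he : e ∈ Ioo (0:ℝ) 1) {s : Set ℝ} (hs : MeasurableSet s) :
    (betaPrimeMeasure' a (a+b)) {w | w / (w + (1 - e)) ∈ s}
      = ∫⁻ u in s ∩ Ioo 0 1,
          ENNReal.ofReal ((1-e) / (1-u)^2) * bpd a (a+b) ((1-e) * u / (1-u)) := by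
  have hc : 0 < 1 - e := by linarith [he.2]
  have hA : MeasurableSet {w : ℝ | w / (w + (1 - e)) ∈ s} := by
    have : Measurable fun w : ℝ => w / (w + (1 - e)) := by fun_prop
    exact this hs
  rw [betaPrimeMeasure', withDensity_apply _ hA,
      setLIntegral_eq_inter (T := Ioi 0) hA measurableSet_Ioi
        (fun x hx => by
          simp only [mem_Ioi, not_lt] at hx
          simp [bpd, if_neg (not_lt.mpr hx)]),
      ← img_w hc s,
      lintegral_image_cov (hs.inter measurableSet_Ioo)
        (fun u hu => (hasDeriv_w hu.2).hasDerivWithinAt)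
        ((inj_w hc).mono inter_subset_right) (bpd a (a+b))]
  refine setLIntegral_congr_fun (hs.inter measurableSet_Ioo) ?_
  intro u hu
  have h1u : 0 < 1 - u := by linarith [hu.2.2]
  dsimp only
  rw [abs_of_pos (by positivity : (0:ℝ) < (1-e)/(1-u)^2)]

lemma img_e {u : ℝ} (hu : u ∈ Ioo (0:ℝ) 1) :
    (fun t => t / (1 - u * (1 - t))) '' Ioo 0 1 = Ioo (0:ℝ) 1 := by
  have hu0 := hu.1; have hu1 := hu.2
  ext e
  constructor
  · rintro ⟨t, ⟨ht0, ht1⟩, rfl⟩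
    have hΔ : 0 < 1 - u * (1 - t) := by nlinarith
    constructor
    · positivity
    · rw [div_lt_one hΔ]; nlinarith
  · rintro ⟨he0, he1⟩
    have heu : 0 < 1 - e * u := by nlinarith
    have h1u : (0:ℝ) < 1 - u := by linarith
    refine ⟨e * (1 - u) / (1 - e * u), ⟨div_pos (mul_pos he0 h1u) heu, ?_⟩, ?_⟩
    · rw [div_lt_one heu]; nlinarith
    · have hΔ : 1 - u * (1 - e * (1 - u) / (1 - e * u)) = (1 - u) / (1 - e * u) := by
        have : 1 - u * e ≠ 0 := by rw [mul_comm]; exact heu.ne'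
        field_simp
        ring
      show e * (1 - u) / (1 - e * u) / (1 - u * (1 - e * (1 - u) / (1 - e * u))) = e
      rw [hΔ]
      rw [div_div_div_eq]
      field_simp

lemma hasDeriv_e {u t : ℝ} (hu : u ∈ Ioo (0:ℝ) 1) (ht : t ∈ Ioo (0:ℝ) 1) :
    HasDerivAt (fun t => t / (1 - u * (1 - t))) ((1 - u) / (1 - u * (1 - t)) ^ 2) t := by
  have hΔ : 0 < 1 - u * (1 - t) := by nlinarith [hu.1, hu.2, ht.1, ht.2]
  have h1 : HasDerivAt (fun t : ℝ => 1 - u * (1 - t)) u t := by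
    have : HasDerivAt (fun t : ℝ => u * (1 - t)) (-u) t := by
      simpa using ((hasDerivAt_id t).const_sub 1).const_mul u
    simpa using this.const_sub 1
  have : HasDerivAt (fun t => t / (1 - u * (1 - t)))
      ((1 * (1 - u * (1 - t)) - t * u) / (1 - u * (1 - t)) ^ 2) t :=
    (hasDerivAt_id t).div h1 hΔ.ne'
  convert this using 1
  ring

lemma inj_e {u : ℝ} (hu : u ∈ Ioo (0:ℝ) 1) :
    InjOn (fun t => t / (1 - u * (1 - t))) (Ioo (0:ℝ) 1) := by
  intro t1 h1 t2 h2 h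
  have hΔ1 : 0 < 1 - u * (1 - t1) := by nlinarith [hu.1, hu.2, h1.1, h1.2]
  have hΔ2 : 0 < 1 - u * (1 - t2) := by nlinarith [hu.1, hu.2, h2.1, h2.2]
  simp only at h
  rw [div_eq_div_iff hΔ1.ne' hΔ2.ne'] at h
  have h1u : (0:ℝ) < 1 - u := by linarith [hu.2]
  have h' : (t1 - t2) * (1 - u) = 0 := by linear_combination h
  rcases mul_eq_zero.mp h' with h'' | h''
  · linarith
  · linarith

lemma ptwise {a b : ℝ} (ha : 0 < a) (hb : 0 < b) {u t : ℝ}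
    (hu : u ∈ Ioo (0:ℝ) 1) (ht : t ∈ Ioo (0:ℝ) 1) :
    ENNReal.ofReal |(1 - u) / (1 - u * (1 - t)) ^ 2| *
      (bd a b (t / (1 - u * (1 - t))) *
        (ENNReal.ofReal ((1 - t / (1 - u * (1 - t))) / (1 - u) ^ 2) *
          bpd a (a + b) ((1 - t / (1 - u * (1 - t))) * u / (1 - u))))
    = ENNReal.ofReal (Real.Gamma (a + b) / (Real.Gamma a * Real.Gamma b) *
          u ^ (a - 1) * (1 - u) ^ (b - 1) *
          (Real.Gamma (a + (a + b)) / (Real.Gamma a * Real.Gamma (a + b)))) *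
      ENNReal.ofReal (t ^ (a - 1) * (1 - t) ^ (a + b - 1)) := by
  obtain ⟨hu0, hu1⟩ := hu
  obtain ⟨ht0, ht1⟩ := ht
  have h1u : (0:ℝ) < 1 - u := by linarith
  have h1t : (0:ℝ) < 1 - t := by linarith
  have hΔ : (0:ℝ) < 1 - u * (1 - t) := by nlinarith
  set Δ : ℝ := 1 - u * (1 - t) with hΔdef
  have he : t / Δ ∈ Ioo (0:ℝ) 1 := by
    constructor
    · positivity
    · rw [div_lt_one hΔ, hΔdef]; nlinarith
  have h1e : 1 - t / Δ = (1 - t) * (1 - u) / Δ := by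
    field_simp [hΔdef]; ring
  have hw : (1 - t / Δ) * u / (1 - u) = u * (1 - t) / Δ := by
    rw [h1e]; field_simp
  have hwpos : (0:ℝ) < u * (1 - t) / Δ := by positivity
  have h1w : 1 + u * (1 - t) / Δ = Δ⁻¹ := by
    rw [inv_eq_one_div, eq_div_iff hΔ.ne']
    field_simp [hΔdef]
    linarith [hΔdef]
  have hK : (0:ℝ) ≤ Real.Gamma (a + b) / (Real.Gamma a * Real.Gamma b) := by
    have g1 := Real.Gamma_pos_of_pos ha
    have g2 := Real.Gamma_pos_of_pos hb
    have g3 := Real.Gamma_pos_of_pos (by linarith : (0:ℝ) < a + b)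
    positivity
  have hK2 : (0:ℝ) ≤ Real.Gamma (a + (a + b)) / (Real.Gamma a * Real.Gamma (a + b)) := by
    have g1 := Real.Gamma_pos_of_pos ha
    have g2 := Real.Gamma_pos_of_pos (by linarith : (0:ℝ) < a + b)
    have g3 := Real.Gamma_pos_of_pos (by linarith : (0:ℝ) < a + (a + b))
    positivity
  rw [hw]
  simp only [bd, bpd]
  rw [if_pos he, if_pos hwpos, h1e, h1w]
  rw [← ENNReal.ofReal_mul (by positivity), ← ENNReal.ofReal_mul (by positivity),
      ← ENNReal.ofReal_mul (abs_nonneg _), ← ENNReal.ofReal_mul (by positivity)]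
  congr 1
  rw [abs_of_pos (by positivity)]
  rw [Real.div_rpow ht0.le hΔ.le]
  rw [Real.div_rpow (by positivity) hΔ.le, Real.mul_rpow h1t.le h1u.le]
  rw [Real.div_rpow (by positivity) hΔ.le, Real.mul_rpow hu0.le h1t.le]
  rw [Real.inv_rpow hΔ.le, Real.rpow_neg hΔ.le, inv_inv]
  rw [show a + b - 1 = (b-1) + ((a-1) + 1) by ring, Real.rpow_add h1t, Real.rpow_add h1t,
      Real.rpow_one]
  rw [show a + (a + b) = ((a-1) + (b-1)) + ((a-1) + 3) by ring, Real.rpow_add hΔ,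
      Real.rpow_add hΔ, Real.rpow_add hΔ]
  rw [show (3:ℝ) = ((3:ℕ):ℝ) by norm_num, Real.rpow_natCast]
  have n1 : Δ ^ (a-1) ≠ 0 := (Real.rpow_pos_of_pos hΔ _).ne'
  have n2 : Δ ^ (b-1) ≠ 0 := (Real.rpow_pos_of_pos hΔ _).ne'
  field_simp

lemma L2 {a b : ℝ} (ha : 0 < a) (hb : 0 < b) {u : ℝ} (hu : u ∈ Ioo (0:ℝ) 1) :
    ∫⁻ e in Ioo (0:ℝ) 1,
        bd a b e * (ENNReal.ofReal ((1 - e) / (1 - u) ^ 2) * bpd a (a + b) ((1 - e) * u / (1 - u)))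
      = ENNReal.ofReal (Real.Gamma (a + b) / (Real.Gamma a * Real.Gamma b) *
          u ^ (a - 1) * (1 - u) ^ (b - 1)) := by
  conv_lhs => rw [show Ioo (0:ℝ) 1 = (fun t => t / (1 - u * (1 - t))) '' Ioo 0 1 from (img_e hu).symm]
  rw [lintegral_image_cov measurableSet_Ioo
      (fun t ht => (hasDeriv_e hu ht).hasDerivWithinAt) (inj_e hu) _]
  rw [setLIntegral_congr_fun measurableSet_Ioo
      (fun t ht => ptwise ha hb hu ht)]
  rw [lintegral_const_mul' _ _ ENNReal.ofReal_ne_top,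
      lintegral_beta ha (by linarith : (0:ℝ) < a + b),
      ← ENNReal.ofReal_mul (by
        have g1 := Real.Gamma_pos_of_pos ha
        have g2 := Real.Gamma_pos_of_pos hb
        have g3 := Real.Gamma_pos_of_pos (by linarith : (0:ℝ) < a + b)
        have g4 := Real.Gamma_pos_of_pos (by linarith : (0:ℝ) < a + (a + b))
        have h1 : 0 ≤ u ^ (a-1) := Real.rpow_nonneg hu.1.le _
        have h2 : 0 ≤ (1-u) ^ (b-1) := Real.rpow_nonneg (by linarith [hu.2]) _
        positivity)]
  congr 1
  have g1 := (Real.Gamma_pos_of_pos ha).ne'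
  have g2 := (Real.Gamma_pos_of_pos (by linarith : (0:ℝ) < a + b)).ne'
  have g3 := (Real.Gamma_pos_of_pos (by linarith : (0:ℝ) < a + (a + b))).ne'
  field_simp

lemma lintegral_eq_set {f : ℝ → ℝ≥0∞} {T : Set ℝ} (hT : MeasurableSet T)
    (hf : ∀ x ∉ T, f x = 0) : ∫⁻ x, f x = ∫⁻ x in T, f x := by
  rw [← lintegral_indicator hT]
  congr 1; funext x
  by_cases hx : x ∈ T <;> simp [indicator, hx, hf]

lemma bd_eq_zero {a b x : ℝ} (hx : x ∉ Ioo (0:ℝ) 1) : bd a b x = 0 := by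
  unfold bd
  rw [if_neg hx]
  exact ENNReal.ofReal_zero

lemma key {a b : ℝ} (ha : 0 < a) (hb : 0 < b) :
    ((volume.withDensity (bd a b)).prod (betaPrimeMeasure' a (a + b))).map
      (fun q : ℝ × ℝ => q.2 / (q.2 + 1 - q.1)) = volume.withDensity (bd a b) := by
  have hg : Measurable fun q : ℝ × ℝ => q.2 / (q.2 + 1 - q.1) := by fun_prop
  haveI : SFinite (betaPrimeMeasure' a (a + b)) := by unfold betaPrimeMeasure'; infer_instance
  ext s hs
  rw [Measure.map_apply hg hs, Measure.prod_apply (hg hs),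
      lintegral_withDensity_eq_lintegral_mul _ (bd_measurable a b)
        (measurable_measure_prodMk_left (hg hs))]
  simp only [Pi.mul_apply]
  rw [lintegral_eq_set measurableSet_Ioo
      (fun e he => by rw [bd_eq_zero he, zero_mul])]
  rw [setLIntegral_congr_fun measurableSet_Ioo ((fun e he => by
    have hset : (Prod.mk e ⁻¹' ((fun q : ℝ × ℝ => q.2 / (q.2 + 1 - q.1)) ⁻¹' s))
        = {w : ℝ | w / (w + (1 - e)) ∈ s} := by
      ext w; simp [Set.mem_preimage, Set.mem_setOf_eq, add_sub_assoc]
    rw [hset, L1 he hs, ← lintegral_const_mul' _ _ (by exact ENNReal.ofReal_ne_top)]))]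
  have hmeas : Measurable (fun z : ℝ × ℝ =>
      bd a b z.1 * (ENNReal.ofReal ((1 - z.1) / (1 - z.2) ^ 2) *
        bpd a (a + b) ((1 - z.1) * z.2 / (1 - z.2)))) := by
    refine (((bd_measurable a b).comp measurable_fst).mul ?_)
    refine Measurable.mul ?_ ((bpd_measurable _ _).comp (by fun_prop))
    exact (by fun_prop : Measurable fun z : ℝ × ℝ => (1 - z.1) / (1 - z.2) ^ 2).ennreal_ofReal
  rw [lintegral_lintegral_swap hmeas.aemeasurable]
  rw [setLIntegral_congr_fun (hs.inter measurableSet_Ioo)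
      ((fun u hu => L2 ha hb hu.2))]
  rw [withDensity_apply _ hs,
      setLIntegral_eq_inter hs measurableSet_Ioo (fun x hx => bd_eq_zero hx)]
  refine (setLIntegral_congr_fun (hs.inter measurableSet_Ioo)
      ((fun u hu => ?_))).symm
  simp only [bd]
  rw [if_pos hu.2]

lemma withDensity_ne_zero_of_pos {f : ℝ → ℝ≥0∞} (hm : Measurable f) {T : Set ℝ}
    (hT : volume T ≠ 0) (h : ∀ x ∈ T, f x ≠ 0) : volume.withDensity f ≠ 0 := by
  intro h0
  have hae : f =ᵐ[volume] 0 := (withDensity_eq_zero_iff hm.aemeasurable).mp h0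
  rw [Filter.EventuallyEq, ae_iff] at hae
  refine hT (measure_mono_null (fun x hx => ?_) hae)
  simp only [Set.mem_setOf_eq, Pi.zero_apply]
  exact h x hx

lemma betaM_ne {a b : ℝ} (ha : 0 < a) (hb : 0 < b) :
    volume.withDensity (bd a b) ≠ 0 := by
  refine withDensity_ne_zero_of_pos (bd_measurable a b) (T := Ioo 0 1)
    (by rw [Real.volume_Ioo]; simp) (fun x hx => ?_)
  unfold bd
  rw [if_pos hx]
  refine (ENNReal.ofReal_pos.mpr ?_).ne'
  have g1 := Real.Gamma_pos_of_pos ha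
  have g2 := Real.Gamma_pos_of_pos hb
  have g3 := Real.Gamma_pos_of_pos (by linarith : (0:ℝ) < a + b)
  have h1 : (0:ℝ) < x ^ (a-1) := Real.rpow_pos_of_pos hx.1 _
  have h2 : (0:ℝ) < (1-x) ^ (b-1) := Real.rpow_pos_of_pos (by linarith [hx.2]) _
  positivity

lemma betaP_ne {a b : ℝ} (ha : 0 < a) (hb : 0 < b) :
    betaPrimeMeasure' a b ≠ 0 := by
  refine withDensity_ne_zero_of_pos (bpd_measurable a b) (T := Ioi 0)
    (by rw [Real.volume_Ioi]; simp) (fun x hx => ?_)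
  unfold bpd
  rw [if_pos (mem_Ioi.mp hx)]
  refine (ENNReal.ofReal_pos.mpr ?_).ne'
  have hx0 : (0:ℝ) < x := hx
  have g1 := Real.Gamma_pos_of_pos ha
  have g2 := Real.Gamma_pos_of_pos hb
  have g3 := Real.Gamma_pos_of_pos (by linarith : (0:ℝ) < a + b)
  have h1 : (0:ℝ) < x ^ (a-1) := Real.rpow_pos_of_pos hx0 _
  have h2 : (0:ℝ) < (1+x) ^ (-(a+b)) := Real.rpow_pos_of_pos (by linarith) _
  positivity

lemma betaMeasure_eq (a b : ℝ) : betaMeasure' a b = volume.withDensity (bd a b) := rfl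

lemma betaPrimeMeasure_eq (a b : ℝ) : betaPrimeMeasure a b = betaPrimeMeasure' a b := rfl


/-- for the Markov chain `η_k = W_k / (W_k + 1 - η_{k-1})` on `[0,1)` with
`W_k ~ BetaPrime(p/2, (n+p)/2)` i.i.d., the distribution `Beta(p/2, n/2)` is stationary:
if `η ~ Beta(p/2, n/2)` and `W ~ BetaPrime(p/2, (n+p)/2)` are independent, then
`W/(W + 1 - η) ~ Beta(p/2, n/2)`. -/
theorem beta_stationary_for_eta_chain
    {Ω : Type*} [MeasurableSpace Ω] (μ : Measure Ω) [IsProbabilityMeasure μ]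
    (n p : ℕ) (hn : 5 ≤ n) (hp : 1 ≤ p)
    (η W : Ω → ℝ)
    (hη : μ.map η = betaMeasure' ((p : ℝ) / 2) ((n : ℝ) / 2))
    (hW : μ.map W = betaPrimeMeasure ((p : ℝ) / 2) (((n : ℝ) + (p : ℝ)) / 2))
    (hind : IndepFun η W μ) :
    μ.map (fun ω => W ω / (W ω + 1 - η ω))
      = betaMeasure' ((p : ℝ) / 2) ((n : ℝ) / 2) := by
  have hpR : (0:ℝ) < p := by exact_mod_cast Nat.pos_of_ne_zero (by omega)
  have hnR : (0:ℝ) < n := by exact_mod_cast Nat.pos_of_ne_zero (by omega)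
  have ha : 0 < (p : ℝ) / 2 := by linarith
  have hb : 0 < (n : ℝ) / 2 := by linarith
  have hBP : betaPrimeMeasure ((p : ℝ) / 2) (((n : ℝ) + (p : ℝ)) / 2)
      = betaPrimeMeasure' ((p : ℝ) / 2) ((p : ℝ) / 2 + (n : ℝ) / 2) := by
    rw [show ((n:ℝ) + (p:ℝ)) / 2 = (p:ℝ)/2 + (n:ℝ)/2 by ring]
    rfl
  have hηm : AEMeasurable η μ := by
    by_contra h
    rw [Measure.map_of_not_aemeasurable h] at hη
    exact betaM_ne ha hb (by rw [← betaMeasure_eq, ← hη])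
  have hWm : AEMeasurable W μ := by
    by_contra h
    rw [Measure.map_of_not_aemeasurable h] at hW
    exact betaP_ne ha (by linarith : (0:ℝ) < (p:ℝ)/2 + (n:ℝ)/2)
      (by rw [← hBP, ← hW])
  have hprod := (ProbabilityTheory.indepFun_iff_map_prod_eq_prod_map_map hηm hWm).mp hind
  have hg : Measurable fun q : ℝ × ℝ => q.2 / (q.2 + 1 - q.1) := by fun_prop
  have hcomp : (fun ω => W ω / (W ω + 1 - η ω))
      = (fun q : ℝ × ℝ => q.2 / (q.2 + 1 - q.1)) ∘ (fun ω => (η ω, W ω)) := rfl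
  rw [hcomp, ← AEMeasurable.map_map_of_aemeasurable hg.aemeasurable (hηm.prodMk hWm),
      hprod, hη, hW, hBP, betaMeasure_eq]
  exact key ha hb
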